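/- Let A ∈ ℝᵐˣⁿ have rank r. Then the stacked matrix [Iₘ ⊗ A ; (AA⁺ − Iₘ) ⊗ Iₙ] has rank mr + (m−r)(n−r). -/
import Mathlib


open Matrix Kronecker

/-- trace of an idempotent real matrix equals its rank -/
lemma trace_eq_rank_of_idem {ι : Type*} [Fintype ι] [DecidableEq ι]
    (E : Matrix ι ι ℝ) (h : E * E = E) : E.trace = (E.rank : ℝ) := by
  have hproj : LinearMap.IsProj (LinearMap.range E.mulVecLin) E.mulVecLin := by
    constructor
    · intro x; exact LinearMap.mem_range_self _ x
    · rintro x ⟨y, rfl⟩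
      have := congrArg Matrix.mulVecLin h
      rw [Matrix.mulVecLin_mul] at this
      exact congrFun (congrArg (fun f => f.toFun) this) y
  have htr := hproj.trace
  rw [Matrix.rank]
  rw [← htr]
  rw [LinearMap.trace_eq_matrix_trace ℝ (Pi.basisFun ℝ ι)]
  congr 1
  rw [LinearMap.toMatrix_eq_toMatrix']
  rw [← Matrix.toLin'_apply', LinearMap.toMatrix'_toLin']

lemma sub_kronecker {l m n p : Type*} (A B : Matrix l m ℝ) (C : Matrix n p ℝ) :
    (A - B) ⊗ₖ C = A ⊗ₖ C - B ⊗ₖ C := by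
  ext ⟨i, j⟩ ⟨k, s⟩
  simp [Matrix.kroneckerMap_apply, sub_mul]

lemma kronecker_sub {l m n p : Type*} (A : Matrix l m ℝ) (B C : Matrix n p ℝ) :
    A ⊗ₖ (B - C) = A ⊗ₖ B - A ⊗ₖ C := by
  ext ⟨i, j⟩ ⟨k, s⟩
  simp [Matrix.kroneckerMap_apply, mul_sub]

theorem stacked_kronecker_rank (m n r : ℕ) (A : Matrix (Fin m) (Fin n) ℝ)
    (hrank : A.rank = r)
    (Aplus : Matrix (Fin n) (Fin m) ℝ)
    (hp1 : A * Aplus * A = A) (hp2 : Aplus * A * Aplus = Aplus)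
    (hp3 : (A * Aplus)ᵀ = A * Aplus) (hp4 : (Aplus * A)ᵀ = Aplus * A) :
    (Matrix.fromRows ((1 : Matrix (Fin m) (Fin m) ℝ) ⊗ₖ A)
        ((A * Aplus - 1) ⊗ₖ (1 : Matrix (Fin n) (Fin n) ℝ))).rank
      = m * r + (m - r) * (n - r) := by
  obtain ⟨Q, hQ⟩ : ∃ Q, A * Aplus = Q := ⟨_, rfl⟩
  obtain ⟨P, hP⟩ : ∃ P, Aplus * A = P := ⟨_, rfl⟩
  rw [hQ]
  have hQA : Q * A = A := by rw [← hQ, hp1]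
  have hAP : A * P = A := by rw [← hP, ← Matrix.mul_assoc, hp1]
  have hQidem : Q * Q = Q := by
    rw [← hQ, ← Matrix.mul_assoc, hp1]
  have hPidem : P * P = P := by
    rw [← hP, ← Matrix.mul_assoc, hp2]
  -- ranks of P and Q
  have hrankQ : Q.rank = r := by
    refine le_antisymm ?_ ?_
    · rw [← hrank, ← hQ]; exact Matrix.rank_mul_le_left A Aplus
    · rw [← hrank]
      calc A.rank = (Q * A).rank := by rw [hQA]
        _ ≤ Q.rank := Matrix.rank_mul_le_left Q A
  have hrankP : P.rank = r := by
    refine le_antisymm ?_ ?_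
    · rw [← hrank, ← hP]; exact Matrix.rank_mul_le_right Aplus A
    · rw [← hrank]
      calc A.rank = (A * P).rank := by rw [hAP]
        _ ≤ P.rank := Matrix.rank_mul_le_right A P
  have hrm : r ≤ m := by rw [← hrank]; exact A.rank_le_height
  have hrn : r ≤ n := by rw [← hrank]; exact A.rank_le_width
  -- traces
  have htrQ : Q.trace = (r : ℝ) := by
    rw [trace_eq_rank_of_idem Q hQidem, hrankQ]
  have htrP : P.trace = (r : ℝ) := by
    rw [trace_eq_rank_of_idem P hPidem, hrankP]
  -- basic square-projection algebra
  have h1P : ((1 : Matrix (Fin n) (Fin n) ℝ) - P) * (1 - P) = 1 - P := by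
    rw [Matrix.sub_mul, Matrix.one_mul, Matrix.mul_sub, Matrix.mul_one, hPidem]
    abel
  have hQ1 : (Q - 1) * ((1 : Matrix (Fin m) (Fin m) ℝ) - Q) = Q - 1 := by
    rw [Matrix.sub_mul, Matrix.one_mul, Matrix.mul_sub, Matrix.mul_one, hQidem]
    abel
  -- abbreviations
  obtain ⟨X, hX⟩ : ∃ X, (1 : Matrix (Fin m) (Fin m) ℝ) ⊗ₖ A = X := ⟨_, rfl⟩
  obtain ⟨Y, hY⟩ : ∃ Y, (Q - 1) ⊗ₖ (1 : Matrix (Fin n) (Fin n) ℝ) = Y := ⟨_, rfl⟩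
  obtain ⟨E, hE⟩ : ∃ E, Q ⊗ₖ ((1 : Matrix (Fin n) (Fin n) ℝ) - P) = E := ⟨_, rfl⟩
  obtain ⟨T, hT⟩ : ∃ T, (1 : Matrix (Fin m × Fin n) (Fin m × Fin n) ℝ) - E = T := ⟨_, rfl⟩
  rw [hX, hY]
  have hEidem : E * E = E := by
    rw [← hE, ← Matrix.mul_kronecker_mul, hQidem, h1P]
  have hTidem : T * T = T := by
    rw [← hT, Matrix.sub_mul, Matrix.one_mul, Matrix.mul_sub, Matrix.mul_one, hEidem]
    abel
  -- alternative form of T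
  have hTalt : T = (1 : Matrix (Fin m) (Fin m) ℝ) ⊗ₖ P +
      ((1 : Matrix (Fin m) (Fin m) ℝ) - Q) ⊗ₖ ((1 : Matrix (Fin n) (Fin n) ℝ) - P) := by
    rw [← hT, ← hE, sub_kronecker, kronecker_sub, kronecker_sub, Matrix.one_kronecker_one]
    abel
  -- T = C * M where M is the stacked matrix
  obtain ⟨M, hM⟩ : ∃ M, Matrix.fromRows X Y = M := ⟨_, rfl⟩
  rw [hM]
  obtain ⟨C, hC⟩ : ∃ C, Matrix.fromCols ((1 : Matrix (Fin m) (Fin m) ℝ) ⊗ₖ Aplus)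
      ((-1 : Matrix (Fin m) (Fin m) ℝ) ⊗ₖ ((1 : Matrix (Fin n) (Fin n) ℝ) - P)) = C := ⟨_, rfl⟩
  have hCM : C * M = T := by
    rw [← hC, ← hM, Matrix.fromCols_mul_fromRows, ← hX, ← hY,
      ← Matrix.mul_kronecker_mul, ← Matrix.mul_kronecker_mul, hP, hTalt]
    simp only [Matrix.one_mul, Matrix.mul_one, Matrix.neg_mul, neg_sub]
  have hA1P : A * ((1 : Matrix (Fin n) (Fin n) ℝ) - P) = 0 := by
    rw [Matrix.mul_sub, Matrix.mul_one, hAP, sub_self]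
  have hXT : X * T = X := by
    rw [← hX, hTalt, Matrix.mul_add, ← Matrix.mul_kronecker_mul, ← Matrix.mul_kronecker_mul,
      hAP, hA1P, Matrix.kronecker_zero, add_zero, Matrix.one_mul]
  have hsum : P + ((1 : Matrix (Fin n) (Fin n) ℝ) - P) = 1 := by abel
  have hYT : Y * T = Y := by
    rw [← hY, hTalt, Matrix.mul_add, ← Matrix.mul_kronecker_mul, ← Matrix.mul_kronecker_mul, hQ1]
    simp only [Matrix.one_mul, Matrix.mul_one]
    rw [← Matrix.kronecker_add, hsum]
  have hMT : M * T = M := by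
    rw [← hM, Matrix.fromRows_mul, hXT, hYT]
  -- rank M = rank T
  have hrankMT : M.rank = T.rank := by
    refine le_antisymm ?_ ?_
    · calc M.rank = (M * T).rank := by rw [hMT]
        _ ≤ T.rank := Matrix.rank_mul_le_right M T
    · calc T.rank = (C * M).rank := by rw [hCM]
        _ ≤ M.rank := Matrix.rank_mul_le_right C M
  -- trace of T
  have htrT : T.trace = (m : ℝ) * n - r * (n - r) := by
    rw [← hT, Matrix.trace_sub, ← hE, Matrix.trace_kronecker, Matrix.trace_sub,
      Matrix.trace_one, Matrix.trace_one, htrQ, htrP]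
    simp [Fintype.card_prod]
  -- rank T via trace
  have hrT : (T.rank : ℝ) = (m : ℝ) * n - r * (n - r) := by
    rw [← trace_eq_rank_of_idem T hTidem, htrT]
  have hfinal : (T.rank : ℝ) = ((m * r + (m - r) * (n - r) : ℕ) : ℝ) := by
    rw [hrT]
    push_cast [Nat.cast_sub hrm, Nat.cast_sub hrn]
    ring
  have hfin : T.rank = m * r + (m - r) * (n - r) := by exact_mod_cast hfinal
  rw [hrankMT, hfin]
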